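/- Let U, V ∈ ℂ^{n×ℓ}, assume U has orthonormal columns and ‖U - V‖ ≤ 1/2 (spectral norm). Then ‖sin Θ(U, V)‖ ≤ 2‖U - V‖, where ‖sin Θ(U,V)‖ = max of (sup over unit u ∈ range(U) of dist(u, range(V)), sup over unit v ∈ range(V) of dist(v, range(U))). -/

import Mathlib

open Matrix

noncomputable def enormC {m : ℕ} (x : Fin m → ℂ) : ℝ :=
  Real.sqrt (star x ⬝ᵥ x).re

noncomputable def mnorm {m k : ℕ} (M : Matrix (Fin m) (Fin k) ℂ) : ℝ :=
  sSup {r | ∃ z : Fin k → ℂ, enormC z = 1 ∧ r = enormC (M *ᵥ z)}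

lemma enormC_eq {m : ℕ} (x : Fin m → ℂ) :
    enormC x = ‖(WithLp.equiv 2 (Fin m → ℂ)).symm x‖ := by
  rw [EuclideanSpace.norm_eq, enormC]
  congr 1
  simp [dotProduct, Complex.re_sum, mul_comm, Complex.mul_conj']
  norm_cast

lemma enormC_nonneg {m : ℕ} (x : Fin m → ℂ) : 0 ≤ enormC x := Real.sqrt_nonneg _

lemma enormC_smul {m : ℕ} (c : ℂ) (x : Fin m → ℂ) : enormC (c • x) = ‖c‖ * enormC x := by
  rw [enormC_eq, enormC_eq]
  exact norm_smul c (WithLp.toLp 2 x)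

lemma enormC_sub_le {m : ℕ} (x y : Fin m → ℂ) : enormC (x - y) ≤ enormC x + enormC y := by
  rw [enormC_eq, enormC_eq, enormC_eq]
  exact norm_sub_le (WithLp.toLp 2 x) (WithLp.toLp 2 y)

lemma enormC_neg {m : ℕ} (x : Fin m → ℂ) : enormC (-x) = enormC x := by
  have : -x = (-1 : ℂ) • x := by simp
  rw [this, enormC_smul]; simp

-- the set defining mnorm is bounded above
lemma mnorm_bddAbove {m k : ℕ} (M : Matrix (Fin m) (Fin k) ℂ) :
    BddAbove {r | ∃ z : Fin k → ℂ, enormC z = 1 ∧ r = enormC (M *ᵥ z)} := by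
  classical
  set T := (Matrix.toEuclideanLin M).toContinuousLinearMap with hT
  refine ⟨‖T‖, ?_⟩
  rintro r ⟨z, hz, rfl⟩
  have key : enormC (M *ᵥ z) = ‖T ((WithLp.equiv 2 (Fin k → ℂ)).symm z)‖ := by
    rw [enormC_eq]
    congr 1
  rw [key]
  calc ‖T ((WithLp.equiv 2 (Fin k → ℂ)).symm z)‖
      ≤ ‖T‖ * ‖(WithLp.equiv 2 (Fin k → ℂ)).symm z‖ := T.le_opNorm _
    _ = ‖T‖ * 1 := by rw [← enormC_eq, hz]
    _ = ‖T‖ := mul_one _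

lemma mnorm_nonneg {m k : ℕ} (M : Matrix (Fin m) (Fin k) ℂ) : 0 ≤ mnorm M :=
  Real.sSup_nonneg (by rintro r ⟨z, hz, rfl⟩; exact enormC_nonneg _)

lemma enormC_mulVec_le {m k : ℕ} (M : Matrix (Fin m) (Fin k) ℂ) (z : Fin k → ℂ) :
    enormC (M *ᵥ z) ≤ mnorm M * enormC z := by
  by_cases hz : enormC z = 0
  · have : z = 0 := by
      rw [enormC_eq] at hz
      have := norm_eq_zero.mp hz
      simpa using congrArg (WithLp.equiv 2 (Fin k → ℂ)) this
    simp [this, hz, Matrix.mulVec_zero, enormC, dotProduct]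
  · have hpos : 0 < enormC z := lt_of_le_of_ne (enormC_nonneg z) (Ne.symm hz)
    set c : ℂ := (enormC z : ℂ)⁻¹ with hc
    have hcn : ‖c‖ = (enormC z)⁻¹ := by
      simp [hc, abs_of_pos hpos]
    have h1 : enormC (c • z) = 1 := by
      rw [enormC_smul, hcn, inv_mul_cancel₀ hz]
    have hmem : enormC (M *ᵥ (c • z)) ∈ {r | ∃ z : Fin k → ℂ, enormC z = 1 ∧ r = enormC (M *ᵥ z)} :=
      ⟨c • z, h1, rfl⟩
    have hle := le_csSup (mnorm_bddAbove M) hmem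
    rw [Matrix.mulVec_smul, enormC_smul, hcn] at hle
    calc enormC (M *ᵥ z) = enormC z * ((enormC z)⁻¹ * enormC (M *ᵥ z)) := by
          field_simp
      _ ≤ enormC z * mnorm M := by
          exact mul_le_mul_of_nonneg_left hle (le_of_lt hpos)
      _ = mnorm M * enormC z := mul_comm _ _

lemma enormC_mulVec_iso {m k : ℕ} (U : Matrix (Fin m) (Fin k) ℂ) (hU : Uᴴ * U = 1)
    (z : Fin k → ℂ) : enormC (U *ᵥ z) = enormC z := by
  unfold enormC
  congr 2
  rw [Matrix.star_mulVec, Matrix.dotProduct_mulVec, Matrix.vecMul_vecMul]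
  rw [hU]
  simp [Matrix.vecMul_one]
def colSpan {m k : ℕ} (U : Matrix (Fin m) (Fin k) ℂ) : Set (Fin m → ℂ) :=
  {y | ∃ z : Fin k → ℂ, y = U *ᵥ z}

noncomputable def edistS {m : ℕ} (x : Fin m → ℂ) (S : Set (Fin m → ℂ)) : ℝ :=
  sInf {r | ∃ y ∈ S, r = enormC (x - y)}

noncomputable def sinTheta {m k l : ℕ} (U : Matrix (Fin m) (Fin k) ℂ)
    (V : Matrix (Fin m) (Fin l) ℂ) : ℝ :=
  max (sSup {r | ∃ u ∈ colSpan U, enormC u = 1 ∧ r = edistS u (colSpan V)})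
      (sSup {r | ∃ v ∈ colSpan V, enormC v = 1 ∧ r = edistS v (colSpan U)})

lemma edistS_le {m : ℕ} (x y : Fin m → ℂ) (S : Set (Fin m → ℂ)) (hy : y ∈ S) :
    edistS x S ≤ enormC (x - y) := by
  apply csInf_le
  · exact ⟨0, by rintro r ⟨w, _, rfl⟩; exact enormC_nonneg _⟩
  · exact ⟨y, hy, rfl⟩

theorem sinTheta_le_two_mul_norm_sub {n l : ℕ}
    (U V : Matrix (Fin n) (Fin l) ℂ) (hU : Uᴴ * U = 1)
    (h : mnorm (U - V) ≤ 1 / 2) :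
    sinTheta U V ≤ 2 * mnorm (U - V) := by
  set ε := mnorm (U - V) with hε
  have hε0 : 0 ≤ ε := mnorm_nonneg _
  have h2ε : (0:ℝ) ≤ 2 * ε := by linarith
  rw [sinTheta]
  apply max_le
  · apply Real.sSup_le _ h2ε
    rintro r ⟨u, ⟨z, rfl⟩, hu1, rfl⟩
    have hz1 : enormC z = 1 := by rw [← enormC_mulVec_iso U hU z, hu1]
    have hd : edistS (U *ᵥ z) (colSpan V) ≤ enormC (U *ᵥ z - V *ᵥ z) :=
      edistS_le _ _ _ ⟨z, rfl⟩
    have hb : enormC (U *ᵥ z - V *ᵥ z) ≤ ε := by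
      rw [← Matrix.sub_mulVec]
      calc enormC ((U - V) *ᵥ z) ≤ ε * enormC z := enormC_mulVec_le _ _
        _ = ε := by rw [hz1, mul_one]
    linarith
  · apply Real.sSup_le _ h2ε
    rintro r ⟨v, ⟨z, rfl⟩, hv1, rfl⟩
    have hd : edistS (V *ᵥ z) (colSpan U) ≤ enormC (V *ᵥ z - U *ᵥ z) :=
      edistS_le _ _ _ ⟨z, rfl⟩
    have heq : enormC (V *ᵥ z - U *ᵥ z) = enormC ((U - V) *ᵥ z) := by
      rw [Matrix.sub_mulVec, ← enormC_neg]; congr 1; abel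
    have hz2 : enormC z ≤ 2 := by
      have h1 : enormC z = enormC (U *ᵥ z) := (enormC_mulVec_iso U hU z).symm
      have h3 : enormC (U *ᵥ z) ≤ enormC (V *ᵥ z) + enormC (U *ᵥ z - V *ᵥ z) := by
        have := enormC_sub_le (U *ᵥ z - V *ᵥ z) (- (V *ᵥ z))
        have h4 : (U *ᵥ z - V *ᵥ z) - (- (V *ᵥ z)) = U *ᵥ z := by abel
        rw [h4, enormC_neg] at this
        linarith
      have h5 : enormC (U *ᵥ z - V *ᵥ z) ≤ ε * enormC z := by
        rw [← Matrix.sub_mulVec]; exact enormC_mulVec_le _ _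
      have h6 : enormC z ≤ 1 + ε * enormC z := by
        rw [h1] at h5 ⊢; rw [hv1] at h3; linarith
      nlinarith [enormC_nonneg z, mul_le_mul_of_nonneg_right h (enormC_nonneg z)]
    have hb : enormC ((U - V) *ᵥ z) ≤ 2 * ε := by
      calc enormC ((U - V) *ᵥ z) ≤ ε * enormC z := enormC_mulVec_le _ _
        _ ≤ ε * 2 := mul_le_mul_of_nonneg_left hz2 hε0
        _ = 2 * ε := mul_comm _ _
    linarith [heq ▸ hd]
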